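/- Let w : [0,∞) → [0,1) be strictly increasing and let w̃ : ℝ → (0,1) be defined by w̃(x) = (1 + w(x))/2 for x > 0, w̃(0) = 1/2, and w̃(x) = (1 − w(−x))/2 for x < 0. Let f₁, f₂ : ℝ → ℝ be strictly increasing, let x₁ > x₂ be reals, and let ε₁, ε₂ be i.i.d. real-valued random variables with arbitrary common distribution. Then E[w̃(f₁(x₁) − f₂(x₂) + ε₁ − ε₂)] > E[w̃(f₁(x₂) − f₂(x₁) + ε₁ − ε₂)]. Consequently, in the canonical setting where each reported score is perturbed by i.i.d. additive noise (reviewer j grading item i reports f_j(x_i) + ε_{ij}), the randomized canonical estimator's probability of correctly identifying the larger item, namely (1/2)·E[1 + w̃(f₁(x₁) − f₂(x₂) + ε₁ − ε₂) − w̃(f₁(x₂) − f₂(x₁) + ε₁ − ε₂)], is strictly greater than 1/2 for every choice of item values, strictly increasing calibration functions, and noise distribution; i.e., the canonical estimator strictly uniformly dominates random guessing in the presence of noise. -/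
import Mathlib


open MeasureTheory

/- STATEMENT 16: With `w`, `w̃` as in the canonical estimator, `f₁, f₂` strictly increasing,
`x₁ > x₂`, and `ε₁, ε₂` i.i.d. with arbitrary common distribution `ν`, we have
`E[w̃(f₁(x₁) − f₂(x₂) + ε₁ − ε₂)] > E[w̃(f₁(x₂) − f₂(x₁) + ε₁ − ε₂)]`. Consequently the
randomized canonical estimator's success probability in the noisy canonical setting,
`(1/2)·E[1 + w̃(f₁(x₁) − f₂(x₂) + ε₁ − ε₂) − w̃(f₁(x₂) − f₂(x₁) + ε₁ − ε₂)]`, is strictly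
greater than 1/2: it strictly uniformly dominates random guessing in the presence of
noise. -/
theorem canonical_estimator_dominates_random_guessing_noisy
    (w : ℝ → ℝ)
    (hw01 : ∀ x : ℝ, 0 ≤ x → w x ∈ Set.Ico (0 : ℝ) 1)
    (hwmono : ∀ x y : ℝ, 0 ≤ x → x < y → w x < w y)
    (wt : ℝ → ℝ)
    (hwt : ∀ x : ℝ, wt x =
      if 0 < x then (1 + w x) / 2 else if x = 0 then 1 / 2 else (1 - w (-x)) / 2)
    (f₁ f₂ : ℝ → ℝ) (hf₁ : StrictMono f₁) (hf₂ : StrictMono f₂)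
    (x₁ x₂ : ℝ) (hx : x₂ < x₁)
    (ν : Measure ℝ) [IsProbabilityMeasure ν] :
    (∫ e : ℝ × ℝ, wt (f₁ x₂ - f₂ x₁ + e.1 - e.2) ∂(ν.prod ν)
        < ∫ e : ℝ × ℝ, wt (f₁ x₁ - f₂ x₂ + e.1 - e.2) ∂(ν.prod ν)) ∧
    ((1 / 2 : ℝ) < (1 / 2) *
      ∫ e : ℝ × ℝ,
        (1 + wt (f₁ x₁ - f₂ x₂ + e.1 - e.2) - wt (f₁ x₂ - f₂ x₁ + e.1 - e.2))
          ∂(ν.prod ν)) := by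
  have hw0 : (0:ℝ) ≤ w 0 := (hw01 0 le_rfl).1
  have hwlt1 : ∀ x : ℝ, 0 ≤ x → w x < 1 := fun x hx => (hw01 x hx).2
  have hwnn : ∀ x : ℝ, 0 ≤ x → 0 ≤ w x := fun x hx => (hw01 x hx).1
  have hwpos : ∀ x : ℝ, 0 < x → 0 < w x :=
    fun x hx => lt_of_le_of_lt hw0 (hwmono 0 x le_rfl hx)
  have hwt_lb : ∀ x, 0 ≤ wt x := by
    intro x; rw [hwt]
    split_ifs with h1 h2
    · have := hwnn x h1.le; linarith
    · norm_num
    · have hneg : x < 0 := lt_of_le_of_ne (not_lt.1 h1) h2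
      have := hwlt1 (-x) (by linarith)
      linarith
  have hwt_ub : ∀ x, wt x ≤ 1 := by
    intro x; rw [hwt]
    split_ifs with h1 h2
    · have := hwlt1 x h1.le; linarith
    · norm_num
    · have hneg : x < 0 := lt_of_le_of_ne (not_lt.1 h1) h2
      have := hwnn (-x) (by linarith)
      linarith
  have hwtmono : StrictMono wt := by
    intro u v huv
    rw [hwt u, hwt v]
    rcases lt_trichotomy u 0 with hu | hu | hu
    · rw [if_neg (by linarith), if_neg hu.ne]
      rcases lt_trichotomy v 0 with hv | hv | hv
      · rw [if_neg (by linarith), if_neg hv.ne]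
        have := hwmono (-v) (-u) (by linarith) (by linarith)
        linarith
      · rw [if_neg (by simp [hv]), if_pos hv]
        have := hwpos (-u) (by linarith)
        linarith
      · rw [if_pos hv]
        have h1 := hwpos v hv
        have h2 := hwnn (-u) (by linarith)
        linarith
    · subst hu
      rw [if_neg (lt_irrefl 0), if_pos rfl, if_pos huv]
      have := hwpos v huv
      linarith
    · rw [if_pos hu, if_pos (lt_trans hu huv)]
      have := hwmono u v hu.le huv
      linarith
  have hwtmeas : Measurable wt := hwtmono.monotone.measurable
  have hint : ∀ c : ℝ, Integrable (fun e : ℝ × ℝ => wt (c + e.1 - e.2)) (ν.prod ν) := by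
    intro c
    have hm : Measurable fun e : ℝ × ℝ => c + e.1 - e.2 :=
      (measurable_const.add measurable_fst).sub measurable_snd
    refine Integrable.mono' (integrable_const (1:ℝ)) (hwtmeas.comp hm).aestronglyMeasurable
      (ae_of_all _ fun e => ?_)
    rw [Real.norm_of_nonneg (hwt_lb _)]
    exact hwt_ub _
  set a := f₁ x₂ - f₂ x₁ with ha
  set b := f₁ x₁ - f₂ x₂ with hb
  have hab : a < b := by
    have h1 := hf₁ hx
    have h2 := hf₂ hx
    simp only [ha, hb]; linarith
  have hpt : ∀ e : ℝ × ℝ, wt (a + e.1 - e.2) < wt (b + e.1 - e.2) :=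
    fun e => hwtmono (by linarith)
  have hIa := hint a
  have hIb := hint b
  have hdiff : Integrable
      (fun e : ℝ × ℝ => wt (b + e.1 - e.2) - wt (a + e.1 - e.2)) (ν.prod ν) := hIb.sub hIa
  have hpos : 0 < ∫ e : ℝ × ℝ, (wt (b + e.1 - e.2) - wt (a + e.1 - e.2)) ∂(ν.prod ν) := by
    rw [integral_pos_iff_support_of_nonneg (fun e => by have := hpt e; simp; linarith) hdiff]
    have : (Function.support fun e : ℝ × ℝ => wt (b + e.1 - e.2) - wt (a + e.1 - e.2))
        = Set.univ := by
      ext e; simp [Function.support]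
      have := hpt e; intro h; linarith
    rw [this]
    simp
  have hsub : ∫ e : ℝ × ℝ, (wt (b + e.1 - e.2) - wt (a + e.1 - e.2)) ∂(ν.prod ν)
      = (∫ e : ℝ × ℝ, wt (b + e.1 - e.2) ∂(ν.prod ν))
        - ∫ e : ℝ × ℝ, wt (a + e.1 - e.2) ∂(ν.prod ν) := integral_sub hIb hIa
  have hmain : ∫ e : ℝ × ℝ, wt (a + e.1 - e.2) ∂(ν.prod ν)
      < ∫ e : ℝ × ℝ, wt (b + e.1 - e.2) ∂(ν.prod ν) := by
    rw [hsub] at hpos; linarith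
  refine ⟨hmain, ?_⟩
  have hexp : ∫ e : ℝ × ℝ,
      (1 + wt (b + e.1 - e.2) - wt (a + e.1 - e.2)) ∂(ν.prod ν)
      = 1 + (∫ e : ℝ × ℝ, wt (b + e.1 - e.2) ∂(ν.prod ν))
        - ∫ e : ℝ × ℝ, wt (a + e.1 - e.2) ∂(ν.prod ν) := by
    have : (fun e : ℝ × ℝ => 1 + wt (b + e.1 - e.2) - wt (a + e.1 - e.2))
        = fun e : ℝ × ℝ => 1 + (wt (b + e.1 - e.2) - wt (a + e.1 - e.2)) :=
      funext fun e => by ring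
    rw [this, integral_add (integrable_const (1:ℝ)) hdiff, hsub, integral_const]
    simp
    ring
  rw [hexp]
  linarith
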